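/- For every integer n ≥ 2, the family of n×n matrices consisting of (1/(2ab)) · NESW(a×b) for a,b ≥ 1 with a+b ≤ n together with (1/(2n)) · HV(i) for 1 ≤ i ≤ n is affinely independent, and the symmetric Monge polytope SM_n equals the convex hull of this family; consequently SM_n is a simplex with n(n+1)/2 vertices. -/

import Mathlib

open Finset

/-- The Monge property for an `n × n` real matrix (indices are 0-based). -/
def IsMonge {n : ℕ} (C : Matrix (Fin n) (Fin n) ℝ) : Prop :=
  ∀ i I j J : Fin n, i < I → j < J → C i j + C I J ≤ C i J + C I j

/-- The symmetric Monge polytope: symmetric matrices with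
nonnegative entries summing to 1, and the Monge property. -/
def SM (n : ℕ) : Set (Matrix (Fin n) (Fin n) ℝ) :=
  {C | C.IsSymm ∧ (∀ i j, 0 ≤ C i j) ∧ (∑ i, ∑ j, C i j) = 1 ∧ IsMonge C}

/-- `NESW n a b` is the `n × n` 0/1 matrix whose (1-based) `(k, l)` entry is 1 iff
`(k ≤ a ∧ l > n - b) ∨ (k > n - b ∧ l ≤ a)`. -/
def NESW (n a b : ℕ) : Matrix (Fin n) (Fin n) ℝ :=
  Matrix.of fun k l =>
    if (k.val + 1 ≤ a ∧ n - b < l.val + 1) ∨ (n - b < k.val + 1 ∧ l.val + 1 ≤ a) then 1 else 0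

/-- `HV n i` is the `n × n` matrix whose (1-based) `(k, l)` entry is `[k = i] + [l = i]`. -/
def HV (n i : ℕ) : Matrix (Fin n) (Fin n) ℝ :=
  Matrix.of fun k l =>
    (if k.val + 1 = i then 1 else 0) + (if l.val + 1 = i then 1 else 0)

/-- The index set of pairs `(a, b)` with `a, b ≥ 1` and `a + b ≤ n`. -/
def idx (n : ℕ) : Finset (ℕ × ℕ) :=
  (Finset.range (n + 1) ×ˢ Finset.range (n + 1)).filter
    fun ab => 1 ≤ ab.1 ∧ 1 ≤ ab.2 ∧ ab.1 + ab.2 ≤ n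

/-- The candidate vertices of the symmetric Monge polytope: the matrices
`(1/(2ab)) • NESW (a × b)` together with the matrices `(1/(2n)) • HV i`. -/
noncomputable def smVertex (n : ℕ)
    (v : {ab : ℕ × ℕ // ab ∈ idx n} ⊕ {i : ℕ // i ∈ Finset.Icc 1 n}) :
    Matrix (Fin n) (Fin n) ℝ :=
  match v with
  | Sum.inl ab => (1 / (2 * (ab.val.1 : ℝ) * (ab.val.2 : ℝ))) • NESW n ab.val.1 ab.val.2
  | Sum.inr i => (1 / (2 * (n : ℝ))) • HV n i.val

namespace SMAux

lemma mem_idx {n : ℕ} {ab : ℕ × ℕ} : ab ∈ idx n ↔ 1 ≤ ab.1 ∧ 1 ≤ ab.2 ∧ ab.1 + ab.2 ≤ n := by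
  simp only [idx, Finset.mem_filter, Finset.mem_product, Finset.mem_range]
  omega

/-- Extension of a matrix to ℕ × ℕ by zero. -/
noncomputable def E (n : ℕ) (C : Matrix (Fin n) (Fin n) ℝ) (p q : ℕ) : ℝ :=
  if h : p < n ∧ q < n then C ⟨p, h.1⟩ ⟨q, h.2⟩ else 0

lemma E_apply {n : ℕ} (C : Matrix (Fin n) (Fin n) ℝ) {p q : ℕ} (hp : p < n) (hq : q < n) :
    E n C p q = C ⟨p, hp⟩ ⟨q, hq⟩ := by
  simp [E, hp, hq]

lemma E_fin {n : ℕ} (C : Matrix (Fin n) (Fin n) ℝ) (k l : Fin n) :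
    E n C k.val l.val = C k l := by
  rw [E_apply C k.2 l.2]

lemma E_symm {n : ℕ} {C : Matrix (Fin n) (Fin n) ℝ} (h : C.IsSymm) (p q : ℕ) :
    E n C p q = E n C q p := by
  unfold E
  split_ifs with h1 h2 h2
  · exact (h.apply _ _).symm
  · omega
  · omega
  · rfl

lemma E_nonneg {n : ℕ} {C : Matrix (Fin n) (Fin n) ℝ} (h : ∀ i j, 0 ≤ C i j) (p q : ℕ) :
    0 ≤ E n C p q := by
  unfold E; split_ifs
  · exact h _ _
  · exact le_refl 0

/-- Second difference operator. -/
noncomputable def Dm (n : ℕ) (C : Matrix (Fin n) (Fin n) ℝ) (p q : ℕ) : ℝ :=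
  E n C p q + E n C (p+1) (q+1) - E n C p (q+1) - E n C (p+1) q

lemma Dm_nonpos {n : ℕ} {C : Matrix (Fin n) (Fin n) ℝ} (hM : IsMonge C)
    {p q : ℕ} (hp : p + 1 < n) (hq : q + 1 < n) : Dm n C p q ≤ 0 := by
  have h := hM ⟨p, by omega⟩ ⟨p+1, hp⟩ ⟨q, by omega⟩ ⟨q+1, hq⟩
    (by simp [Fin.lt_def]) (by simp [Fin.lt_def])
  unfold Dm
  rw [E_apply C (by omega : p < n) (by omega : q < n),
      E_apply C hp hq, E_apply C (by omega : p < n) hq,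
      E_apply C hp (by omega : q < n)]
  linarith

/-- The barycentric coordinate functionals. -/
noncomputable def wf (n : ℕ) (C : Matrix (Fin n) (Fin n) ℝ) :
    ({ab : ℕ × ℕ // ab ∈ idx n} ⊕ {i : ℕ // i ∈ Finset.Icc 1 n}) → ℝ
  | Sum.inl ab => (if ab.val.1 + ab.val.2 = n then ((ab.val.1 : ℝ) * ab.val.2)
      else 2 * ab.val.1 * ab.val.2) * (-(Dm n C (ab.val.1 - 1) (n - ab.val.2 - 1)))
  | Sum.inr i => n * E n C (i.val - 1) (i.val - 1)

lemma wf_nonneg {n : ℕ} {C : Matrix (Fin n) (Fin n) ℝ} (hC : C ∈ SM n) (v) :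
    0 ≤ wf n C v := by
  obtain ⟨hsymm, hpos, hsum, hM⟩ := hC
  cases v with
  | inl ab =>
    obtain ⟨⟨a, b⟩, hab⟩ := ab
    rw [mem_idx] at hab
    simp only [wf]
    have h1 : a - 1 + 1 < n := by omega
    have h2 : n - b - 1 + 1 < n := by omega
    have := Dm_nonpos hM h1 h2
    have hc : (0:ℝ) ≤ (if a + b = n then ((a : ℝ) * b) else 2 * a * b) := by
      split_ifs <;> positivity
    nlinarith
  | inr i =>
    simp only [wf]
    have := E_nonneg hpos (i.val - 1) (i.val - 1)
    positivity

section Linearity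

variable {n : ℕ} {ι : Type*}

lemma E_sum (s : Finset ι) (c : ι → ℝ) (V : ι → Matrix (Fin n) (Fin n) ℝ) (p q : ℕ) :
    E n (∑ u ∈ s, c u • V u) p q = ∑ u ∈ s, c u * E n (V u) p q := by
  unfold E
  split_ifs with h
  · simp [Matrix.sum_apply]
  · simp

lemma Dm_sum (s : Finset ι) (c : ι → ℝ) (V : ι → Matrix (Fin n) (Fin n) ℝ) (p q : ℕ) :
    Dm n (∑ u ∈ s, c u • V u) p q = ∑ u ∈ s, c u * Dm n (V u) p q := by
  unfold Dm
  rw [E_sum, E_sum, E_sum, E_sum, ← Finset.sum_add_distrib, ← Finset.sum_sub_distrib,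
    ← Finset.sum_sub_distrib]
  exact Finset.sum_congr rfl fun u _ => by ring

lemma wf_sum (s : Finset ι) (c : ι → ℝ) (V : ι → Matrix (Fin n) (Fin n) ℝ) (v) :
    wf n (∑ u ∈ s, c u • V u) v = ∑ u ∈ s, c u * wf n (V u) v := by
  cases v with
  | inl ab =>
    simp only [wf, Dm_sum, ← Finset.sum_neg_distrib, Finset.mul_sum]
    exact Finset.sum_congr rfl fun u _ => by ring
  | inr i =>
    simp only [wf, E_sum, Finset.mul_sum]
    exact Finset.sum_congr rfl fun u _ => by ring

lemma E_smul (c : ℝ) (M : Matrix (Fin n) (Fin n) ℝ) (p q : ℕ) :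
    E n (c • M) p q = c * E n M p q := by
  unfold E; split_ifs <;> simp

lemma Dm_smul (c : ℝ) (M : Matrix (Fin n) (Fin n) ℝ) (p q : ℕ) :
    Dm n (c • M) p q = c * Dm n M p q := by
  unfold Dm; rw [E_smul, E_smul, E_smul, E_smul]; ring

end Linearity

section Symm

variable {n : ℕ}

lemma NESW_isSymm (a b : ℕ) : (NESW n a b).IsSymm := by
  apply Matrix.IsSymm.ext
  intro i j
  simp only [NESW, Matrix.of_apply]
  congr 1
  · simp only [eq_iff_iff]; tauto

lemma HV_isSymm (i : ℕ) : (HV n i).IsSymm := by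
  apply Matrix.IsSymm.ext
  intro k l
  simp only [HV, Matrix.of_apply]
  ring

lemma smVertex_isSymm (v) : (smVertex n v).IsSymm := by
  apply Matrix.IsSymm.ext
  intro i j
  cases v with
  | inl ab =>
      simp only [smVertex, Matrix.smul_apply, (NESW_isSymm (n := n) ab.val.1 ab.val.2).apply i j]
  | inr i' =>
      simp only [smVertex, Matrix.smul_apply, (HV_isSymm (n := n) i'.val).apply i j]

end Symm

section Counting

variable {n : ℕ}

lemma sum_indicator_lt (a : ℕ) (ha : a ≤ n) :
    ∑ k : Fin n, (if k.val < a then (1:ℝ) else 0) = a := by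
  rw [Fin.sum_univ_eq_sum_range (fun j => if j < a then (1:ℝ) else 0) n,
    ← Finset.sum_filter]
  have : Finset.filter (fun j => j < a) (Finset.range n) = Finset.range a := by
    ext j; simp only [Finset.mem_filter, Finset.mem_range]; omega
  simp [this]

lemma sum_indicator_ge (b : ℕ) (hb : b ≤ n) :
    ∑ k : Fin n, (if n - b ≤ k.val then (1:ℝ) else 0) = b := by
  rw [Fin.sum_univ_eq_sum_range (fun j => if n - b ≤ j then (1:ℝ) else 0) n,
    ← Finset.sum_filter]
  have : Finset.filter (fun j => n - b ≤ j) (Finset.range n) = Finset.Ico (n - b) n := by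
    ext j; simp only [Finset.mem_filter, Finset.mem_range, Finset.mem_Ico]; omega
  rw [this]
  simp only [Finset.sum_const, nsmul_eq_mul, mul_one, Nat.card_Ico]
  congr 1; omega

lemma sum_indicator_eq (i : ℕ) (h1 : 1 ≤ i) (h2 : i ≤ n) :
    ∑ k : Fin n, (if k.val + 1 = i then (1:ℝ) else 0) = 1 := by
  rw [Finset.sum_eq_single (⟨i - 1, by omega⟩ : Fin n)]
  · simp only []
    rw [if_pos]
    omega
  · intro k _ hk
    rw [if_neg]
    intro hc
    exact hk (Fin.ext (show k.val = i - 1 by omega))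
  · simp

/-- total entry sum -/
noncomputable def T (M : Matrix (Fin n) (Fin n) ℝ) : ℝ := ∑ i, ∑ j, M i j

lemma T_NESW {a b : ℕ} (hab : a + b ≤ n) : T (NESW n a b) = 2 * a * b := by
  unfold T NESW
  have key : ∀ k l : Fin n,
      (if (k.val + 1 ≤ a ∧ n - b < l.val + 1) ∨ (n - b < k.val + 1 ∧ l.val + 1 ≤ a) then (1:ℝ) else 0)
      = (if k.val < a then (1:ℝ) else 0) * (if n - b ≤ l.val then 1 else 0)
        + (if n - b ≤ k.val then (1:ℝ) else 0) * (if l.val < a then 1 else 0) := by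
    intro k l
    have hk := k.2; have hl := l.2
    split_ifs <;> norm_num <;> omega
  simp only [Matrix.of_apply, key]
  simp only [Finset.sum_add_distrib, ← Finset.mul_sum, ← Finset.sum_mul]
  rw [sum_indicator_lt a (by omega), sum_indicator_ge b (by omega)]
  ring

lemma T_HV {i : ℕ} (h1 : 1 ≤ i) (h2 : i ≤ n) : T (HV n i) = 2 * n := by
  unfold T HV
  simp only [Matrix.of_apply, Finset.sum_add_distrib, sum_indicator_eq i h1 h2,
    Finset.sum_const, Finset.card_univ, Fintype.card_fin, nsmul_eq_mul, mul_one]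
  rw [← Finset.mul_sum, sum_indicator_eq i h1 h2]
  ring

lemma T_sum {ι : Type*} (s : Finset ι) (c : ι → ℝ) (V : ι → Matrix (Fin n) (Fin n) ℝ) :
    T (∑ u ∈ s, c u • V u) = ∑ u ∈ s, c u * T (V u) := by
  unfold T
  simp only [Matrix.sum_apply, Matrix.smul_apply, smul_eq_mul, Finset.mul_sum]
  calc ∑ i, ∑ j, ∑ u ∈ s, c u * V u i j
      = ∑ i, ∑ u ∈ s, ∑ j, c u * V u i j :=
        Finset.sum_congr rfl (fun i _ => Finset.sum_comm)
    _ = ∑ u ∈ s, ∑ i, ∑ j, c u * V u i j := Finset.sum_comm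

lemma T_smVertex (hn : 2 ≤ n) (v) : T (smVertex n v) = 1 := by
  cases v with
  | inl ab =>
    obtain ⟨⟨a, b⟩, hab⟩ := ab
    rw [mem_idx] at hab
    simp only [smVertex]
    unfold T
    simp only [Matrix.smul_apply, smul_eq_mul, ← Finset.mul_sum]
    have : ∑ i, ∑ j, NESW n a b i j = 2 * a * b := T_NESW (by omega)
    rw [this]
    have ha : (a:ℝ) ≠ 0 := Nat.cast_ne_zero.2 (by omega)
    have hb : (b:ℝ) ≠ 0 := Nat.cast_ne_zero.2 (by omega)
    field_simp
  | inr i =>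
    have hi := i.2
    rw [Finset.mem_Icc] at hi
    simp only [smVertex]
    unfold T
    simp only [Matrix.smul_apply, smul_eq_mul, ← Finset.mul_sum]
    have : ∑ k, ∑ j, HV n i.val k j = 2 * n := T_HV hi.1 hi.2
    rw [this]
    have hn' : (n:ℝ) ≠ 0 := Nat.cast_ne_zero.2 (by omega)
    field_simp

end Counting

section Membership

variable {n : ℕ}

lemma NESW_monge (a b : ℕ) (hab : a + b ≤ n) : IsMonge (NESW n a b) := by
  intro i I j J hiI hjJ
  rw [Fin.lt_def] at hiI hjJ
  simp only [NESW, Matrix.of_apply]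
  split_ifs <;> norm_num <;> omega

lemma HV_monge (i : ℕ) : IsMonge (HV n i) := by
  intro k K l L _ _
  simp only [HV, Matrix.of_apply]
  ring_nf
  exact le_refl _

lemma smul_monge {c : ℝ} (hc : 0 ≤ c) {M : Matrix (Fin n) (Fin n) ℝ} (hM : IsMonge M) :
    IsMonge (c • M) := by
  intro i I j J hiI hjJ
  simp only [Matrix.smul_apply, smul_eq_mul]
  have := hM i I j J hiI hjJ
  nlinarith

lemma smVertex_mem_SM (hn : 2 ≤ n) (v) : smVertex n v ∈ SM n := by
  have hT := T_smVertex hn v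
  cases v with
  | inl ab =>
    obtain ⟨⟨a, b⟩, hab⟩ := ab
    have hab' := mem_idx.1 hab
    refine ⟨smVertex_isSymm _, ?_, hT, ?_⟩
    · intro i j
      simp only [smVertex, Matrix.smul_apply, smul_eq_mul, NESW, Matrix.of_apply]
      have : (0:ℝ) ≤ 1 / (2 * (a:ℝ) * b) := by positivity
      split_ifs <;> simp [this] <;> positivity
    · exact smul_monge (by positivity) (NESW_monge a b (by omega))
  | inr i =>
    refine ⟨smVertex_isSymm _, ?_, hT, ?_⟩
    · intro k l
      simp only [smVertex, Matrix.smul_apply, smul_eq_mul, HV, Matrix.of_apply]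
      have h0 : (0:ℝ) ≤ 1 / (2 * (n:ℝ)) := by positivity
      split_ifs <;> simp [h0] <;> positivity
    · exact smul_monge (by positivity) (HV_monge i.val)

end Membership

section Telescope

lemma tele (f : ℕ → ℝ) {a b : ℕ} (h : a ≤ b) :
    ∑ i ∈ Finset.Ico a b, (f (i + 1) - f i) = f b - f a := by
  induction b, h using Nat.le_induction with
  | base => simp
  | succ b hab ih =>
    rw [Finset.sum_Ico_succ_top (by omega), ih]
    ring

end Telescope

section Dual

variable {n : ℕ}

lemma Dm_HV (i : ℕ) {p q : ℕ} (hp : p + 1 < n) (hq : q + 1 < n) :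
    Dm n (HV n i) p q = 0 := by
  unfold Dm
  rw [E_apply _ (by omega) (by omega), E_apply _ (by omega) (by omega),
    E_apply _ (by omega) (by omega), E_apply _ (by omega) (by omega)]
  simp only [HV, Matrix.of_apply]
  ring

lemma Dm_NESW {a b : ℕ} (ha : 1 ≤ a) (hb : 1 ≤ b) (hab : a + b ≤ n) {p q : ℕ}
    (hp : p + 1 < n) (hq : q + 1 < n) :
    Dm n (NESW n a b) p q =
      -(if p = a - 1 ∧ q = n - b - 1 then (1:ℝ) else 0)
      - (if p = n - b - 1 ∧ q = a - 1 then (1:ℝ) else 0) := by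
  unfold Dm
  rw [E_apply _ (by omega) (by omega), E_apply _ (by omega) (by omega),
    E_apply _ (by omega) (by omega), E_apply _ (by omega) (by omega)]
  simp only [NESW, Matrix.of_apply]
  split_ifs <;> norm_num <;> omega

end Dual

section DualBasis

variable {n : ℕ}

lemma wf_dual (hn : 2 ≤ n) (u v) :
    wf n (smVertex n u) v = if u = v then 1 else 0 := by
  cases u with
  | inl ab =>
    obtain ⟨⟨a, b⟩, hab⟩ := ab
    obtain ⟨ha, hb, hab'⟩ := mem_idx.1 hab
    have haR : (a:ℝ) ≠ 0 := Nat.cast_ne_zero.2 (by omega)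
    have hbR : (b:ℝ) ≠ 0 := Nat.cast_ne_zero.2 (by omega)
    cases v with
    | inl ab' =>
      obtain ⟨⟨a', b'⟩, hab2⟩ := ab'
      obtain ⟨ha', hb', hab2'⟩ := mem_idx.1 hab2
      simp only [wf, smVertex, Dm_smul]
      rw [Dm_NESW ha hb hab' (by omega) (by omega)]
      have heq : (Sum.inl ⟨(a, b), hab⟩ :
          {ab : ℕ × ℕ // ab ∈ idx n} ⊕ {i : ℕ // i ∈ Finset.Icc 1 n}) =
          Sum.inl ⟨(a', b'), hab2⟩ ↔ (a = a' ∧ b = b') := by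
        constructor
        · intro h
          injection h with h'
          have := Subtype.ext_iff.1 h'
          exact ⟨(Prod.ext_iff.1 this).1, (Prod.ext_iff.1 this).2⟩
        · rintro ⟨rfl, rfl⟩; rfl
      simp only [heq]
      by_cases hcase : a = a' ∧ b = b'
      · obtain ⟨rfl, rfl⟩ := hcase
        rw [if_pos (show a = a ∧ b = b from ⟨rfl, rfl⟩),
          if_pos (show a - 1 = a - 1 ∧ n - b - 1 = n - b - 1 from ⟨rfl, rfl⟩)]
        by_cases hd : a + b = n
        · rw [if_pos hd, if_pos (show a - 1 = n - b - 1 ∧ n - b - 1 = a - 1 by omega)]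
          field_simp
          ring
        · rw [if_neg hd, if_neg (show ¬(a - 1 = n - b - 1 ∧ n - b - 1 = a - 1) by omega)]
          field_simp
          ring
      · rw [if_neg hcase,
          if_neg (show ¬(a' - 1 = a - 1 ∧ n - b' - 1 = n - b - 1) by omega),
          if_neg (show ¬(a' - 1 = n - b - 1 ∧ n - b' - 1 = a - 1) by omega)]
        ring
    | inr i =>
      have hi := Finset.mem_Icc.1 i.2
      simp only [wf, smVertex, E_smul]
      rw [if_neg (show (Sum.inl ⟨(a,b), hab⟩ : {ab : ℕ × ℕ // ab ∈ idx n} ⊕ {i : ℕ // i ∈ Finset.Icc 1 n}) ≠ Sum.inr i from Sum.inl_ne_inr), E_apply _ (by omega) (by omega)]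
      simp only [NESW, Matrix.of_apply]
      rw [if_neg (by omega)]
      ring
  | inr i =>
    have hi := Finset.mem_Icc.1 i.2
    have hnR : (n:ℝ) ≠ 0 := Nat.cast_ne_zero.2 (by omega)
    cases v with
    | inl ab' =>
      obtain ⟨⟨a', b'⟩, hab2⟩ := ab'
      obtain ⟨ha', hb', hab2'⟩ := mem_idx.1 hab2
      simp only [wf, smVertex, Dm_smul]
      rw [Dm_HV i.val (by omega) (by omega), if_neg (show (Sum.inr i : {ab : ℕ × ℕ // ab ∈ idx n} ⊕ {i : ℕ // i ∈ Finset.Icc 1 n}) ≠ Sum.inl ⟨(a',b'), hab2⟩ from Sum.inr_ne_inl)]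
      ring
    | inr j =>
      have hj := Finset.mem_Icc.1 j.2
      simp only [wf, smVertex, E_smul]
      rw [E_apply _ (by omega) (by omega)]
      simp only [HV, Matrix.of_apply]
      have heq : (Sum.inr i : {ab : ℕ × ℕ // ab ∈ idx n} ⊕ {i : ℕ // i ∈ Finset.Icc 1 n})
          = Sum.inr j ↔ i.val = j.val := by
        constructor
        · intro h; injection h with h'; exact congrArg Subtype.val h'
        · intro h; exact congrArg Sum.inr (Subtype.ext h)
      simp only [heq]
      by_cases hij : i.val = j.val
      · rw [if_pos hij, if_pos (show (j.val : ℕ) - 1 + 1 = i.val by omega)]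
        field_simp
        ring
      · rw [if_neg hij, if_neg (show ¬((j.val : ℕ) - 1 + 1 = i.val) by omega)]
        ring

end DualBasis

section Reconstruct

variable {n : ℕ}

lemma inner_sum (C : Matrix (Fin n) (Fin n) ℝ) (hC : C.IsSymm) {p l : ℕ} (hpl : p < l)
    (hl : l < n) :
    ∑ q ∈ Finset.Ico p l, (if p = q then (2:ℝ)⁻¹ else 1) * (-(Dm n C p q)) =
      (1/2) * (E n C (p+1) (p+1) - E n C p p) + (E n C p l - E n C (p+1) l) := by
  rw [Finset.sum_eq_sum_Ico_succ_bot hpl]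
  rw [if_pos rfl]
  have hrest : ∑ q ∈ Finset.Ico (p+1) l, (if p = q then (2:ℝ)⁻¹ else 1) * (-(Dm n C p q))
      = ∑ q ∈ Finset.Ico (p+1) l,
          ((fun q => E n C p q - E n C (p+1) q) (q+1) - (fun q => E n C p q - E n C (p+1) q) q) := by
    refine Finset.sum_congr rfl fun q hq => ?_
    rw [Finset.mem_Ico] at hq
    rw [if_neg (by omega)]
    simp only [Dm]
    ring
  rw [hrest, tele (fun q => E n C p q - E n C (p + 1) q) (show p + 1 ≤ l by omega)]
  have hs : E n C (p+1) p = E n C p (p+1) := E_symm hC _ _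
  simp only [Dm]
  rw [hs]
  ring

lemma outer_sum (C : Matrix (Fin n) (Fin n) ℝ) {k l : ℕ} (hkl : k ≤ l) :
    ∑ p ∈ Finset.Ico k l,
      ((1/2) * (E n C (p+1) (p+1) - E n C p p) + (E n C p l - E n C (p+1) l)) =
      (1/2) * (E n C l l - E n C k k) + (E n C k l - E n C l l) := by
  rw [Finset.sum_add_distrib, ← Finset.mul_sum, tele (fun p => E n C p p) hkl]
  have : ∑ p ∈ Finset.Ico k l, (E n C p l - E n C (p+1) l)
      = -∑ p ∈ Finset.Ico k l, ((fun p => E n C p l) (p+1) - (fun p => E n C p l) p) := by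
    rw [← Finset.sum_neg_distrib]
    exact Finset.sum_congr rfl fun p _ => by ring
  rw [this, tele (fun p => E n C p l) hkl]
  ring

lemma reconstruct_le (hn : 2 ≤ n) (C : Matrix (Fin n) (Fin n) ℝ) (hC : C.IsSymm)
    (k l : Fin n) (hkl : k.val ≤ l.val) :
    ∑ v, wf n C v * smVertex n v k l = C k l := by
  rw [Fintype.sum_sum_type]
  -- the HV part
  have h2 : ∑ i : {i : ℕ // i ∈ Finset.Icc 1 n},
        wf n C (Sum.inr i) * smVertex n (Sum.inr i) k l
      = ∑ i ∈ Finset.Icc 1 n, ((n : ℝ) * E n C (i-1) (i-1)) *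
          ((1/(2*(n:ℝ))) * (HV n i k l)) := by
    rw [Finset.univ_eq_attach,
      ← Finset.sum_attach (Finset.Icc 1 n)
        (fun i => ((n : ℝ) * E n C (i-1) (i-1)) * ((1/(2*(n:ℝ))) * (HV n i k l)))]
    refine Finset.sum_congr rfl fun i _ => ?_
    simp only [wf, smVertex, Matrix.smul_apply, smul_eq_mul]
  have key : ∀ m : Fin n, ∑ i ∈ Finset.Icc 1 n, ((n : ℝ) * E n C (i-1) (i-1)) *
      ((1/(2*(n:ℝ))) * (if m.val + 1 = i then (1:ℝ) else 0)) = (1/2) * E n C m.val m.val := by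
    intro m
    have hm := m.2
    have hnR : (n:ℝ) ≠ 0 := Nat.cast_ne_zero.2 (by omega)
    rw [Finset.sum_eq_single (m.val + 1)]
    · rw [if_pos rfl, Nat.add_sub_cancel]
      field_simp
    · intro j _ hj
      rw [if_neg (by omega)]
      ring
    · intro h
      exact absurd (Finset.mem_Icc.2 ⟨by omega, by omega⟩) h
  have h2' : ∑ i ∈ Finset.Icc 1 n, ((n : ℝ) * E n C (i-1) (i-1)) *
        ((1/(2*(n:ℝ))) * (HV n i k l))
      = (1/2) * E n C k.val k.val + (1/2) * E n C l.val l.val := by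
    have split : ∀ i ∈ Finset.Icc 1 n, ((n : ℝ) * E n C (i-1) (i-1)) *
          ((1/(2*(n:ℝ))) * (HV n i k l))
        = ((n : ℝ) * E n C (i-1) (i-1)) * ((1/(2*(n:ℝ))) * (if k.val + 1 = i then (1:ℝ) else 0))
          + ((n : ℝ) * E n C (i-1) (i-1)) *
            ((1/(2*(n:ℝ))) * (if l.val + 1 = i then (1:ℝ) else 0)) := by
      intro i _
      simp only [HV, Matrix.of_apply]
      ring
    rw [Finset.sum_congr rfl split, Finset.sum_add_distrib, key k, key l]
  -- the NESW part
  have h3 : ∑ ab : {ab : ℕ × ℕ // ab ∈ idx n},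
        wf n C (Sum.inl ab) * smVertex n (Sum.inl ab) k l
      = ∑ ab ∈ idx n,
          (if ab.1 + ab.2 = n then ((ab.1:ℝ) * ab.2) else 2 * ab.1 * ab.2)
            * (-(Dm n C (ab.1-1) (n-ab.2-1)))
            * ((1/(2*(ab.1:ℝ)*ab.2)) * (NESW n ab.1 ab.2 k l)) := by
    rw [Finset.univ_eq_attach,
      ← Finset.sum_attach (idx n)
        (fun ab => (if ab.1 + ab.2 = n then ((ab.1:ℝ) * ab.2) else 2 * ab.1 * ab.2)
            * (-(Dm n C (ab.1-1) (n-ab.2-1)))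
            * ((1/(2*(ab.1:ℝ)*ab.2)) * (NESW n ab.1 ab.2 k l)))]
    refine Finset.sum_congr rfl fun ab _ => ?_
    simp only [wf, smVertex, Matrix.smul_apply, smul_eq_mul]
  have step : ∀ ab ∈ idx n,
      (if ab.1 + ab.2 = n then ((ab.1:ℝ) * ab.2) else 2 * ab.1 * ab.2)
        * (-(Dm n C (ab.1-1) (n-ab.2-1)))
        * ((1/(2*(ab.1:ℝ)*ab.2)) * (NESW n ab.1 ab.2 k l))
      = if k.val < ab.1 ∧ n - ab.2 ≤ l.val ∧ k.val < l.val then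
          (if ab.1 - 1 = n - ab.2 - 1 then (2:ℝ)⁻¹ else 1) * (-(Dm n C (ab.1-1) (n-ab.2-1)))
        else 0 := by
    rintro ⟨a, b⟩ hab
    obtain ⟨ha, hb, hab'⟩ := mem_idx.1 hab
    have haR : ((a:ℕ):ℝ) ≠ 0 := Nat.cast_ne_zero.2 (by omega)
    have hbR : ((b:ℕ):ℝ) ≠ 0 := Nat.cast_ne_zero.2 (by omega)
    have hk := k.2
    have hl := l.2
    simp only [NESW, Matrix.of_apply]
    by_cases hcond : k.val < a ∧ n - b ≤ l.val ∧ k.val < l.val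
    · rw [if_pos hcond,
        if_pos (show (k.val + 1 ≤ a ∧ n - b < l.val + 1) ∨ (n - b < k.val + 1 ∧ l.val + 1 ≤ a)
          by omega)]
      by_cases hd : a + b = n
      · rw [if_pos hd, if_pos (show a - 1 = n - b - 1 by omega)]
        field_simp
      · rw [if_neg hd, if_neg (show ¬(a - 1 = n - b - 1) by omega)]
        field_simp
    · rw [if_neg hcond,
        if_neg (show ¬((k.val + 1 ≤ a ∧ n - b < l.val + 1) ∨ (n - b < k.val + 1 ∧ l.val + 1 ≤ a))
          by omega)]
      ring
  have h4 : ∑ ab ∈ idx n,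
        (if k.val < ab.1 ∧ n - ab.2 ≤ l.val ∧ k.val < l.val then
          (if ab.1 - 1 = n - ab.2 - 1 then (2:ℝ)⁻¹ else 1) * (-(Dm n C (ab.1-1) (n-ab.2-1)))
        else 0)
      = ∑ ab ∈ (idx n).filter (fun ab => k.val < ab.1 ∧ n - ab.2 ≤ l.val ∧ k.val < l.val),
          (if ab.1 - 1 = n - ab.2 - 1 then (2:ℝ)⁻¹ else 1) * (-(Dm n C (ab.1-1) (n-ab.2-1))) :=
    (Finset.sum_filter _ _).symm
  have h5 : ∑ ab ∈ (idx n).filter (fun ab => k.val < ab.1 ∧ n - ab.2 ≤ l.val ∧ k.val < l.val),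
        (if ab.1 - 1 = n - ab.2 - 1 then (2:ℝ)⁻¹ else 1) * (-(Dm n C (ab.1-1) (n-ab.2-1)))
      = ∑ x ∈ (Finset.Ico k.val l.val).sigma (fun p => Finset.Ico p l.val),
          (if x.1 = x.2 then (2:ℝ)⁻¹ else 1) * (-(Dm n C x.1 x.2)) := by
    have hk := k.2
    have hl := l.2
    refine Finset.sum_nbij' (fun ab => ⟨ab.1 - 1, n - ab.2 - 1⟩)
      (fun x => (x.1 + 1, n - 1 - x.2)) ?_ ?_ ?_ ?_ ?_
    · rintro ⟨a, b⟩ hab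
      simp only [Finset.mem_filter, mem_idx, Finset.mem_sigma, Finset.mem_Ico] at *
      omega
    · rintro ⟨p, q⟩ hx
      simp only [Finset.mem_filter, mem_idx, Finset.mem_sigma, Finset.mem_Ico] at *
      omega
    · rintro ⟨a, b⟩ hab
      simp only [Finset.mem_filter, mem_idx] at hab
      simp only [Prod.mk.injEq]
      omega
    · rintro ⟨p, q⟩ hx
      simp only [Finset.mem_sigma, Finset.mem_Ico] at hx
      show (⟨p + 1 - 1, n - (n - 1 - q) - 1⟩ : (_ : ℕ) × ℕ) = ⟨p, q⟩
      have e1 : p + 1 - 1 = p := by omega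
      have e2 : n - (n - 1 - q) - 1 = q := by omega
      rw [e1, e2]
    · rintro ⟨a, b⟩ hab
      rfl
  rw [h2, h2', h3, Finset.sum_congr rfl step, h4, h5, Finset.sum_sigma]
  have hin : ∀ p ∈ Finset.Ico k.val l.val,
      (∑ q ∈ Finset.Ico p l.val, (if p = q then (2:ℝ)⁻¹ else 1) * (-(Dm n C p q)))
      = (1/2) * (E n C (p+1) (p+1) - E n C p p) + (E n C p l.val - E n C (p+1) l.val) :=
    fun p hp => inner_sum C hC (Finset.mem_Ico.1 hp).2 l.2
  rw [Finset.sum_congr rfl hin, outer_sum C hkl, ← E_fin C k l]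
  ring

end Reconstruct

section Assembly

variable {n : ℕ}

lemma reconstruct (hn : 2 ≤ n) (C : Matrix (Fin n) (Fin n) ℝ) (hC : C.IsSymm) :
    ∑ v, wf n C v • smVertex n v = C := by
  ext k l
  rw [Matrix.sum_apply]
  simp only [Matrix.smul_apply, smul_eq_mul]
  rcases le_or_gt k.val l.val with h | h
  · exact reconstruct_le hn C hC k l h
  · have hsw : ∀ v, smVertex n v k l = smVertex n v l k :=
      fun v => (smVertex_isSymm v).apply l k
    calc ∑ v, wf n C v * smVertex n v k l = ∑ v, wf n C v * smVertex n v l k :=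
          Finset.sum_congr rfl fun v _ => by rw [hsw v]
      _ = C l k := reconstruct_le hn C hC l k (le_of_lt h)
      _ = C k l := hC.apply k l

lemma wf_total (hn : 2 ≤ n) (C : Matrix (Fin n) (Fin n) ℝ) (hC : C ∈ SM n) :
    ∑ v, wf n C v = 1 := by
  obtain ⟨hsymm, hpos, hsum, hM⟩ := hC
  have h1 : T (∑ v, wf n C v • smVertex n v) = T C := by
    rw [reconstruct hn C hsymm]
  rw [T_sum] at h1
  have h2 : ∀ v ∈ (Finset.univ : Finset _), wf n C v * T (smVertex n v) = wf n C v :=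
    fun v _ => by rw [T_smVertex hn v, mul_one]
  rw [Finset.sum_congr rfl h2] at h1
  rw [h1]
  exact hsum

lemma SM_convex : Convex ℝ (SM n) := by
  intro x hx y hy a b ha hb hab
  obtain ⟨hxs, hxp, hxsum, hxm⟩ := hx
  obtain ⟨hys, hyp, hysum, hym⟩ := hy
  have happ : ∀ i j, (a • x + b • y) i j = a * x i j + b * y i j := fun i j => by
    simp [Matrix.add_apply, Matrix.smul_apply]
  refine ⟨Matrix.IsSymm.ext fun i j => ?_, fun i j => ?_, ?_, fun i I j J hiI hjJ => ?_⟩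
  · rw [happ, happ, hxs.apply i j, hys.apply i j]
  · rw [happ]
    have := hxp i j; have := hyp i j
    positivity
  · simp only [happ, Finset.sum_add_distrib, ← Finset.mul_sum]
    rw [hxsum, hysum]
    linarith
  · simp only [happ]
    have h1 := hxm i I j J hiI hjJ
    have h2 := hym i I j J hiI hjJ
    nlinarith

lemma SM_subset_hull (hn : 2 ≤ n) : SM n ⊆ convexHull ℝ (Set.range (smVertex n)) := by
  intro C hC
  have hw0 : ∀ v ∈ (Finset.univ : Finset _), 0 ≤ wf n C v := fun v _ => wf_nonneg hC v
  have hw1 : ∑ v, wf n C v = 1 := wf_total hn C hC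
  have := Finset.centerMass_mem_convexHull (Finset.univ) hw0 (by rw [hw1]; norm_num)
    (fun v _ => Set.mem_range_self (f := smVertex n) v)
  rwa [Finset.centerMass, hw1, inv_one, one_smul, reconstruct hn C hC.1] at this

lemma hull_subset_SM (hn : 2 ≤ n) : convexHull ℝ (Set.range (smVertex n)) ⊆ SM n := by
  apply convexHull_min _ SM_convex
  rintro _ ⟨v, rfl⟩
  exact smVertex_mem_SM hn v

lemma smVertex_affineIndependent (hn : 2 ≤ n) : AffineIndependent ℝ (smVertex n) := by
  rw [affineIndependent_iff]
  intro s c hsum hcomb v hv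
  have h := congrArg (fun M => wf n M v) hcomb
  rw [wf_sum] at h
  have hz : wf n (0 : Matrix (Fin n) (Fin n) ℝ) v = 0 := by
    cases v with
    | inl ab => simp [wf, Dm, E]
    | inr i => simp [wf, E]
  rw [hz] at h
  have hd : ∀ u ∈ s, c u * wf n (smVertex n u) v = if u = v then c u else 0 := by
    intro u _
    rw [wf_dual hn u v]
    split_ifs <;> ring
  rw [Finset.sum_congr rfl hd, Finset.sum_ite_eq' s v c] at h
  rw [if_pos hv] at h
  exact h

end Assembly

lemma card_eq (n : ℕ) (hn : 2 ≤ n) :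
    (idx n).card + (Finset.Icc 1 n).card = n * (n + 1) / 2 := by
  have h1 : (idx n).card = ∑ a ∈ Finset.range (n+1), ∑ b ∈ Finset.range (n+1),
      if 1 ≤ a ∧ 1 ≤ b ∧ a + b ≤ n then 1 else 0 := by
    rw [idx, Finset.card_eq_sum_ones, Finset.sum_filter, Finset.sum_product]
  have inner : ∀ a ∈ Finset.range (n+1), (∑ b ∈ Finset.range (n+1),
      if 1 ≤ a ∧ 1 ≤ b ∧ a + b ≤ n then 1 else 0) = if 1 ≤ a then n - a else 0 := by
    intro a _
    rw [← Finset.sum_filter]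
    by_cases ha : 1 ≤ a
    · rw [if_pos ha]
      have : (Finset.range (n+1)).filter (fun b => 1 ≤ a ∧ 1 ≤ b ∧ a + b ≤ n)
          = Finset.Icc 1 (n - a) := by
        ext b
        simp only [Finset.mem_filter, Finset.mem_range, Finset.mem_Icc]
        omega
      rw [this]
      simp only [Finset.sum_const, smul_eq_mul, mul_one, Nat.card_Icc]
      omega
    · rw [if_neg ha]
      have : (Finset.range (n+1)).filter (fun b => 1 ≤ a ∧ 1 ≤ b ∧ a + b ≤ n) = ∅ := by
        ext b
        simp only [Finset.mem_filter, Finset.mem_range, Finset.notMem_empty, iff_false]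
        omega
      rw [this, Finset.sum_empty]
  rw [h1, Finset.sum_congr rfl inner, Finset.sum_range_succ']
  simp only [if_neg (by omega : ¬ (1 ≤ 0)), add_zero]
  have e1 : ∀ i ∈ Finset.range n, (if 1 ≤ i + 1 then n - (i+1) else 0) = n - 1 - i := by
    intro i _
    rw [if_pos (by omega)]
    omega
  rw [Finset.sum_congr rfl e1, Finset.sum_range_reflect (fun j => j) n, Finset.sum_range_id,
    Nat.card_Icc]
  obtain ⟨m, rfl⟩ : ∃ m, n = m + 2 := ⟨n - 2, by omega⟩
  have e2 : m + 2 - 1 = m + 1 := rfl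
  have e3 : m + 2 + 1 - 1 = m + 2 := rfl
  rw [e2, e3]
  have e4 : (m+2) * (m+3) = (m+2)*(m+1) + (m+2) * 2 := by ring
  have e5 : m + 2 + 1 = m + 3 := rfl
  rw [e5, e4, Nat.add_mul_div_right _ _ (by omega : 0 < 2)]

end SMAux

/-- The family consisting of `(1/(2ab)) • NESW (a × b)` (for `a, b ≥ 1`, `a + b ≤ n`)
together with `(1/(2n)) • HV i` (for `1 ≤ i ≤ n`) is affinely independent, and the
symmetric Monge polytope is its convex hull; it is a simplex with `n(n+1)/2` vertices. -/
theorem sm_simplex (n : ℕ) (hn : 2 ≤ n) :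
    AffineIndependent ℝ (smVertex n) ∧
    SM n = convexHull ℝ (Set.range (smVertex n)) ∧
    Function.Injective (smVertex n) ∧
    (idx n).card + (Finset.Icc 1 n).card = n * (n + 1) / 2 := by
  refine ⟨SMAux.smVertex_affineIndependent hn, ?_, ?_, SMAux.card_eq n hn⟩
  · exact Set.Subset.antisymm (SMAux.SM_subset_hull hn) (SMAux.hull_subset_SM hn)
  · exact (SMAux.smVertex_affineIndependent hn).injective
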